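/- Let N be an even positive integer, m ≥ 1 an integer with 2^m dividing N, and ψ ∈ Π[N] with ψ̂[0] = ψ̂[N/2] = 0. If the 2^m-sample shifts of ψ are orthonormal, i.e. ⟨ψ, ψ[·−2^m l]⟩ = 1 for l ≡ 0 (mod N/2^m) and = 0 for all other l with 0 ≤ l < N/2^m, then the 2^m-sample shifts of θ = H(ψ) satisfy the same relations: ⟨θ, θ[·−2^m l]⟩ = 1 for l ≡ 0 and = 0 otherwise. -/

import Mathlib

open MeasureTheory

namespace WP

/-- The root of unity ω = e^{2πi/N}. -/
noncomputable def ww (N : ℕ) : ℂ := Complex.exp (2 * Real.pi * Complex.I / N)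

/-- DFT of a signal `x ∈ Π[N]`: x̂[n] = Σ_{k=0}^{N−1} ω^{−kn} x[k]. -/
noncomputable def dft (N : ℕ) (x : ℤ → ℂ) (n : ℤ) : ℂ :=
  ∑ k ∈ Finset.range N, ww N ^ (-((k : ℤ) * n)) * x k

/-- Inner product on `Π[N]`. -/
noncomputable def inner1 (N : ℕ) (x y : ℤ → ℂ) : ℂ :=
  ∑ k ∈ Finset.range N, x k * (starRingEnd ℂ) (y k)

/-- The discrete periodic Hilbert transform, defined via the DFT:
    Ĥ(x)[n] = −i·x̂[n] for 0<n<N/2, i·x̂[n] for N/2<n<N, 0 at n=0 and n=N/2. -/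
noncomputable def hilbertT (N : ℕ) (x : ℤ → ℂ) (k : ℤ) : ℂ :=
  (N : ℂ)⁻¹ * ∑ n ∈ Finset.range N,
    (if 0 < n ∧ n < N / 2 then -Complex.I else if N / 2 < n ∧ n < N then Complex.I else 0) *
      dft N x n * ww N ^ ((k * (n : ℤ)))

/-- The complementary-WP operator `C`, defined via the DFT:
    Ĉ(x)[n] = −i·x̂[n] for 0<n<N/2, i·x̂[n] for N/2<n<N, x̂[0] at 0, x̂[N/2] at N/2. -/
noncomputable def cwpT (N : ℕ) (x : ℤ → ℂ) (k : ℤ) : ℂ :=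
  (N : ℂ)⁻¹ * ∑ n ∈ Finset.range N,
    (if n = 0 ∨ n = N / 2 then 1 else if n < N / 2 then -Complex.I else Complex.I) *
      dft N x n * ww N ^ ((k * (n : ℤ)))

/-- The order-p B-spline b^p(t). -/
noncomputable def bspline (p : ℕ) (t : ℝ) : ℝ :=
  (1 / (Nat.factorial (p - 1) : ℝ)) *
    ∑ k ∈ Finset.range (p + 1),
      (-1 : ℝ) ^ k * (p.choose k : ℝ) * max (t + (p : ℝ) / 2 - (k : ℝ)) 0 ^ (p - 1)

/-- u^p[n] = Σ_{k=−N/2}^{N/2−1} ω^{−kn} b^p(k). -/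
noncomputable def uSeq (N p : ℕ) (n : ℤ) : ℂ :=
  ∑ k ∈ Finset.range N,
    ww N ^ (-(((k : ℤ) - (N : ℤ) / 2) * n)) * (bspline p ((k : ℝ) - (N : ℝ) / 2) : ℂ)

/-- v^p[n] = e^{−πin/N} Σ_{k=−N/2}^{N/2−1} ω^{−kn} b^p(k+1/2). -/
noncomputable def vSeq (N p : ℕ) (n : ℤ) : ℂ :=
  Complex.exp (-Real.pi * Complex.I * n / N) *
    ∑ k ∈ Finset.range N,
      ww N ^ (-(((k : ℤ) - (N : ℤ) / 2) * n)) *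
        (bspline p ((k : ℝ) - (N : ℝ) / 2 + 1 / 2) : ℂ)

/-- The span-two discrete-time B-spline b_{[1]}^p ∈ Π[N]:
    the N-periodic signal with b_{[1]}^p[k] = b^p(k/2)/2 for −N/2 ≤ k ≤ N/2−1. -/
noncomputable def bs1 (N p : ℕ) (k : ℤ) : ℂ :=
  ((bspline p ((((k + (N : ℤ) / 2) % (N : ℤ) - (N : ℤ) / 2 : ℤ) : ℝ) / 2) : ℝ) : ℂ) / 2

/-- Its DFT b̂_{[1]}^p[n] = Σ_{k=−N/2}^{N/2−1} ω^{−kn} b_{[1]}^p[k]. -/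
noncomputable def bhat1 (N p : ℕ) (n : ℤ) : ℂ :=
  ∑ k ∈ Finset.range N,
    ww N ^ (-(((k : ℤ) - (N : ℤ) / 2) * n)) * bs1 N p ((k : ℤ) - (N : ℤ) / 2)

/-- Υ^p[n] = (u^p[2n]² + v^p[2n]²)/4. -/
noncomputable def upsilon (N p : ℕ) (n : ℤ) : ℂ :=
  (uSeq N p (2 * n) ^ 2 + vSeq N p (2 * n) ^ 2) / 4

/-- β[n] = b̂_{[1]}^p[n] / √(Υ^p[n]). -/
noncomputable def betaS (N p : ℕ) (n : ℤ) : ℂ := bhat1 N p n / upsilon N p n ^ ((1 : ℂ) / 2)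

/-- α[n] = ω^n · β[n+N/2]. -/
noncomputable def alphaS (N p : ℕ) (n : ℤ) : ℂ := ww N ^ n * betaS N p (n + (N : ℤ) / 2)

/-- The first-level wavelet packets ψ_{[1],λ}^p, λ = 0,1, defined via their DFTs
    ψ̂_{[1],0}^p[n] = β[n] and ψ̂_{[1],1}^p[n] = α[n]. -/
noncomputable def psi1 (N p lam : ℕ) (k : ℤ) : ℂ :=
  (N : ℂ)⁻¹ * ∑ n ∈ Finset.range N,
    (if lam = 0 then betaS N p n else alphaS N p n) * ww N ^ ((k * (n : ℤ)))



private lemma ww_zpow (N : ℕ) (t : ℤ) :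
    ww N ^ t = Complex.exp ((t : ℂ) * (2 * Real.pi * Complex.I / N)) := by
  rw [ww, ← Complex.exp_int_mul]

private lemma conj_ww (N : ℕ) (z : ℤ) : (starRingEnd ℂ) (ww N ^ z) = ww N ^ (-z) := by
  rw [ww_zpow, ww_zpow, ← Complex.exp_conj]
  congr 1
  simp [map_mul, map_div₀, Complex.conj_I, map_ofNat]
  ring

private lemma ww_zpow_add (N : ℕ) (s t : ℤ) : ww N ^ (s + t) = ww N ^ s * ww N ^ t := by
  rw [ww_zpow, ww_zpow, ww_zpow, ← Complex.exp_add]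
  congr 1; push_cast; ring

private lemma ww_sum (N : ℕ) (hN : 0 < N) (t : ℤ) :
    ∑ n ∈ Finset.range N, ww N ^ (t * (n : ℤ)) = if (N : ℤ) ∣ t then (N : ℂ) else 0 := by
  have hNc : (N : ℂ) ≠ 0 := Nat.cast_ne_zero.mpr hN.ne'
  have h1 : ∀ n ∈ Finset.range N, ww N ^ (t * (n : ℤ)) = (ww N ^ t) ^ n := by
    intro n _
    rw [ww_zpow, ww_zpow, ← Complex.exp_nat_mul]
    congr 1; push_cast; ring
  rw [Finset.sum_congr rfl h1]
  by_cases hd : (N : ℤ) ∣ t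
  · obtain ⟨c, rfl⟩ := hd
    have h2 : ww N ^ ((N : ℤ) * c) = 1 := by
      rw [ww_zpow]
      rw [show ((((N:ℤ)*c : ℤ) : ℂ)) * (2 * Real.pi * Complex.I / N)
          = (c:ℂ) * (2 * Real.pi * Complex.I) by push_cast; field_simp]
      exact Complex.exp_int_mul_two_pi_mul_I c
    simp [h2, if_pos (dvd_mul_right _ _)]
  · rw [if_neg hd]
    have h2pi : (2 * Real.pi * Complex.I) ≠ 0 := by
      simp [Real.pi_ne_zero, Complex.I_ne_zero]
    have hne : ww N ^ t ≠ 1 := by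
      intro h
      rw [ww_zpow, Complex.exp_eq_one_iff] at h
      obtain ⟨k, hk⟩ := h
      apply hd
      have hk' : (2*Real.pi*Complex.I) * ((t:ℂ)/N) = (2*Real.pi*Complex.I) * k := by
        linear_combination hk
      have h3 := (div_eq_iff hNc).mp (mul_left_cancel₀ h2pi hk')
      have h4 : t = k * N := by exact_mod_cast h3
      exact ⟨k, by rw [h4, mul_comm]⟩
    rw [geom_sum_eq hne]
    have h5 : (ww N ^ t) ^ N = 1 := by
      rw [ww_zpow, ← Complex.exp_nat_mul]
      rw [show (N:ℂ) * ((t:ℂ) * (2 * Real.pi * Complex.I / N))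
          = (t:ℂ) * (2 * Real.pi * Complex.I) by field_simp]
      exact Complex.exp_int_mul_two_pi_mul_I t
    rw [h5]; simp

private lemma ww_add_period (N : ℕ) (hN : 0 < N) (k : ℤ) (n : ℕ) :
    ww N ^ ((k + N) * (n : ℤ)) = ww N ^ (k * n) := by
  rw [ww_zpow, ww_zpow]
  rw [show (((k + N) * n : ℤ) : ℂ) * (2 * Real.pi * Complex.I / N)
      = (k * n : ℤ) * (2 * Real.pi * Complex.I / N) + (n : ℤ) * (2 * Real.pi * Complex.I) by
    have hNc : (N : ℂ) ≠ 0 := Nat.cast_ne_zero.mpr hN.ne'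
    push_cast; field_simp]
  rw [Complex.exp_add, Complex.exp_int_mul_two_pi_mul_I, mul_one]

private lemma per_shift {N : ℕ} {x : ℤ → ℂ} (hper : ∀ k : ℤ, x (k + N) = x k) :
    ∀ (c : ℤ) (k : ℤ), x (k + N * c) = x k := by
  have hdown : ∀ k : ℤ, x (k - N) = x k := by
    intro k; simpa using (hper (k - N)).symm
  intro c
  induction c using Int.induction_on with
  | zero => simp
  | succ i ih =>
    intro k
    have h1 : k + (N : ℤ) * ((i : ℤ) + 1) = (k + N * i) + N := by ring
    rw [h1, hper, ih]
  | pred i ih =>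
    intro k
    have h1 : k + (N : ℤ) * (-(i : ℤ) - 1) = (k + N * (-(i:ℤ))) - N := by ring
    rw [h1, hdown, ih]

private lemma per_eval {N : ℕ} {x : ℤ → ℂ} (hN : 0 < N)
    (hper : ∀ k : ℤ, x (k + N) = x k) (z : ℤ) :
    x z = x (z % N) := by
  conv_lhs => rw [show z = z % N + N * (z / N) from (Int.emod_add_mul_ediv z N).symm]
  rw [per_shift hper]

private lemma dft_inv (N : ℕ) (hN : 0 < N) (c : ℕ → ℂ) (n : ℕ) (hn : n < N) :
    dft N (fun k => (N : ℂ)⁻¹ * ∑ n' ∈ Finset.range N, c n' * ww N ^ (k * (n' : ℤ))) n = c n := by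
  have hNc : (N : ℂ) ≠ 0 := Nat.cast_ne_zero.mpr hN.ne'
  unfold dft
  have h1 : ∀ k ∈ Finset.range N,
      ww N ^ (-((k : ℤ) * n)) * ((N : ℂ)⁻¹ * ∑ n' ∈ Finset.range N, c n' * ww N ^ ((k:ℤ) * (n' : ℤ)))
      = (N : ℂ)⁻¹ * ∑ n' ∈ Finset.range N, c n' * ww N ^ (((n' : ℤ) - (n:ℤ)) * (k:ℤ)) := by
    intro k _
    rw [Finset.mul_sum, Finset.mul_sum, Finset.mul_sum]
    apply Finset.sum_congr rfl
    intro n' _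
    rw [show ((n' : ℤ) - (n:ℤ)) * (k:ℤ) = -((k:ℤ) * (n:ℤ)) + (k:ℤ) * (n':ℤ) by ring, ww_zpow_add]
    ring
  rw [Finset.sum_congr rfl h1, ← Finset.mul_sum, Finset.sum_comm]
  have h2 : ∀ n' ∈ Finset.range N,
      ∑ k ∈ Finset.range N, c n' * ww N ^ (((n' : ℤ) - (n:ℤ)) * (k:ℤ))
      = c n' * (if (N:ℤ) ∣ ((n':ℤ) - (n:ℤ)) then (N:ℂ) else 0) := by
    intro n' _
    rw [← Finset.mul_sum, ww_sum N hN]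
  rw [Finset.sum_congr rfl h2]
  have h3 : ∀ n' ∈ Finset.range N,
      c n' * (if (N:ℤ) ∣ ((n':ℤ) - (n:ℤ)) then (N:ℂ) else 0)
      = if n' = n then c n' * N else 0 := by
    intro n' hn'
    have hn'N := Finset.mem_range.mp hn'
    by_cases h : n' = n
    · subst h; simp
    · rw [if_neg h, if_neg, mul_zero]
      intro hdvd
      have habs : |(n':ℤ) - (n:ℤ)| < N := by
        rw [abs_lt]; omega
      have := Int.eq_zero_of_abs_lt_dvd hdvd habs
      omega
  rw [Finset.sum_congr rfl h3, Finset.sum_ite_eq' (Finset.range N) n (fun n' => c n' * N),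
    if_pos (Finset.mem_range.mpr hn)]
  field_simp

private lemma inner_shift_eq (N : ℕ) (hN : 0 < N) (x : ℤ → ℂ)
    (hper : ∀ k : ℤ, x (k + N) = x k) (a : ℤ) :
    inner1 N x (fun k => x (k - a)) =
      (N : ℂ)⁻¹ * ∑ n ∈ Finset.range N,
        dft N x n * (starRingEnd ℂ) (dft N x n) * ww N ^ (a * (n : ℤ)) := by
  have hNc : (N : ℂ) ≠ 0 := Nat.cast_ne_zero.mpr hN.ne'
  have hNZ : (0 : ℤ) < N := by exact_mod_cast hN
  have h1 : ∀ n ∈ Finset.range N,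
      dft N x n * (starRingEnd ℂ) (dft N x n) * ww N ^ (a * (n : ℤ))
      = ∑ j ∈ Finset.range N, ∑ j' ∈ Finset.range N,
          x j * (starRingEnd ℂ) (x j') * ww N ^ ((a + (j' : ℤ) - (j : ℤ)) * (n : ℤ)) := by
    intro n _
    unfold dft
    rw [map_sum, Finset.sum_mul_sum, Finset.sum_mul]
    apply Finset.sum_congr rfl
    intro j _
    rw [Finset.sum_mul]
    apply Finset.sum_congr rfl
    intro j' _
    rw [map_mul, conj_ww]
    rw [show (a + (j' : ℤ) - (j : ℤ)) * (n : ℤ)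
        = -((j:ℤ) * n) + (-(-((j':ℤ) * n)) + a * n) by ring,
      ww_zpow_add, ww_zpow_add]
    ring
  rw [Finset.sum_congr rfl h1, Finset.sum_comm]
  have h2 : ∀ j ∈ Finset.range N,
      ∑ n ∈ Finset.range N, ∑ j' ∈ Finset.range N,
          x j * (starRingEnd ℂ) (x j') * ww N ^ ((a + (j' : ℤ) - (j : ℤ)) * (n : ℤ))
      = x j * (starRingEnd ℂ) (x (j - a)) * N := by
    intro j hj
    have hjN := Finset.mem_range.mp hj
    rw [Finset.sum_comm]
    set j0 : ℤ := ((j : ℤ) - a) % N with hj0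
    have hj0nn : 0 ≤ j0 := Int.emod_nonneg _ hNZ.ne'
    have hj0lt : j0 < N := Int.emod_lt_of_pos _ hNZ
    have hcond : ∀ j' : ℕ, j' < N →
        ((N : ℤ) ∣ (a + (j' : ℤ) - (j : ℤ)) ↔ j' = j0.toNat) := by
      intro j' hj'
      constructor
      · rintro ⟨c, hc⟩
        have h3 : (j' : ℤ) = ((j : ℤ) - a) + N * c := by omega
        have h4 : (j' : ℤ) % N = j0 := by
          rw [h3, Int.add_mul_emod_self_left]
        have h5 : (j' : ℤ) % N = j' := Int.emod_eq_of_lt (by positivity) (by exact_mod_cast hj')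
        omega
      · intro h
        have h3 : (j' : ℤ) = j0 := by omega
        have h4 := Int.emod_add_mul_ediv ((j : ℤ) - a) N
        set t : ℤ := (N : ℤ) * (((j : ℤ) - a) / N) with ht
        refine ⟨-(((j : ℤ) - a) / N), ?_⟩
        rw [mul_neg, ← ht]
        omega
    have h6 : ∀ j' ∈ Finset.range N,
        ∑ n ∈ Finset.range N,
          x j * (starRingEnd ℂ) (x j') * ww N ^ ((a + (j' : ℤ) - (j : ℤ)) * (n : ℤ))
        = if j' = j0.toNat then x j * (starRingEnd ℂ) (x j') * N else 0 := by
      intro j' hj'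
      have hj'N := Finset.mem_range.mp hj'
      rw [← Finset.mul_sum, ww_sum N hN]
      by_cases h : j' = j0.toNat
      · rw [if_pos h, if_pos ((hcond j' hj'N).mpr h)]
      · rw [if_neg h, if_neg (fun hd => h ((hcond j' hj'N).mp hd)), mul_zero]
    rw [Finset.sum_congr rfl h6, Finset.sum_ite_eq' (Finset.range N) j0.toNat
      (fun j' => x j * (starRingEnd ℂ) (x j') * N),
      if_pos (Finset.mem_range.mpr (by omega))]
    congr 2
    rw [per_eval hN hper ((j : ℤ) - a), ← hj0, Int.toNat_of_nonneg hj0nn]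
  rw [Finset.sum_congr rfl h2, ← Finset.sum_mul]
  unfold inner1
  field_simp


/-- If ψ̂[0] = ψ̂[N/2] = 0 and the 2^m-sample shifts of ψ are orthonormal,
    then the 2^m-sample shifts of θ = H(ψ) satisfy the same orthonormality relations. -/
theorem hilbert_shift_orthonormal (N : ℕ) (hN : 0 < N) (hNe : Even N)
    (m : ℕ) (hm : 1 ≤ m) (hdvd : 2 ^ m ∣ N)
    (ψ : ℤ → ℂ) (hper : ∀ k : ℤ, ψ (k + N) = ψ k)
    (h0 : dft N ψ 0 = 0) (h2 : dft N ψ ((N : ℤ) / 2) = 0)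
    (horth : ∀ l : ℕ, l < N / 2 ^ m →
      inner1 N ψ (fun k => ψ (k - ((2 ^ m * l : ℕ) : ℤ))) = if l = 0 then 1 else 0) :
    ∀ l : ℕ, l < N / 2 ^ m →
      inner1 N (hilbertT N ψ) (fun k => hilbertT N ψ (k - ((2 ^ m * l : ℕ) : ℤ)))
        = if l = 0 then 1 else 0 := by
  intro l hl
  have hNc : (N : ℂ) ≠ 0 := Nat.cast_ne_zero.mpr hN.ne'
  set hfun : ℕ → ℂ := fun n =>
    if 0 < n ∧ n < N / 2 then -Complex.I else if N / 2 < n ∧ n < N then Complex.I else 0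
    with hhfun
  set c : ℕ → ℂ := fun n => hfun n * dft N ψ n with hc
  have hHdef : hilbertT N ψ = fun k => (N : ℂ)⁻¹ * ∑ n ∈ Finset.range N,
      c n * ww N ^ (k * (n : ℤ)) := rfl
  have hperH : ∀ k : ℤ, hilbertT N ψ (k + N) = hilbertT N ψ k := by
    intro k
    rw [hHdef]
    simp only []
    congr 1
    apply Finset.sum_congr rfl
    intro n _
    rw [ww_add_period N hN k n]
  have hdftH : ∀ n : ℕ, n < N → dft N (hilbertT N ψ) n = c n := by
    intro n hn
    rw [hHdef]
    exact dft_inv N hN c n hn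
  have key : ∀ n ∈ Finset.range N,
      dft N (hilbertT N ψ) n * (starRingEnd ℂ) (dft N (hilbertT N ψ) n)
        * ww N ^ (((2 ^ m * l : ℕ) : ℤ) * (n : ℤ))
      = dft N ψ n * (starRingEnd ℂ) (dft N ψ n)
        * ww N ^ (((2 ^ m * l : ℕ) : ℤ) * (n : ℤ)) := by
    intro n hn
    have hnN := Finset.mem_range.mp hn
    congr 1
    rw [hdftH n hnN, hc]
    simp only []
    rw [map_mul]
    by_cases hn0 : n = 0
    · subst hn0
      have : dft N ψ ((0 : ℕ) : ℤ) = 0 := by rw [Nat.cast_zero]; exact h0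
      rw [this]; ring
    · by_cases hn2 : n = N / 2
      · have : dft N ψ ((n : ℕ) : ℤ) = 0 := by
          rw [hn2, Int.natCast_div]
          exact_mod_cast h2
        rw [this]; ring
      · have hI : hfun n * (starRingEnd ℂ) (hfun n) = 1 := by
          rcases lt_or_gt_of_ne (fun h => hn2 h) with hlt | hgt
          · have : hfun n = -Complex.I := by
              rw [hhfun]; simp only []
              rw [if_pos ⟨Nat.pos_of_ne_zero hn0, hlt⟩]
            rw [this]
            simp [Complex.conj_I]
          · have : hfun n = Complex.I := by
              rw [hhfun]; simp only []
              rw [if_neg (by omega), if_pos ⟨hgt, hnN⟩]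
            rw [this]
            simp [Complex.conj_I]
        calc hfun n * dft N ψ n * ((starRingEnd ℂ) (hfun n) * (starRingEnd ℂ) (dft N ψ n))
            = (hfun n * (starRingEnd ℂ) (hfun n)) * (dft N ψ n * (starRingEnd ℂ) (dft N ψ n)) := by
              ring
          _ = dft N ψ n * (starRingEnd ℂ) (dft N ψ n) := by rw [hI, one_mul]
  have heq : inner1 N (hilbertT N ψ) (fun k => hilbertT N ψ (k - ((2 ^ m * l : ℕ) : ℤ)))
      = inner1 N ψ (fun k => ψ (k - ((2 ^ m * l : ℕ) : ℤ))) := by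
    rw [inner_shift_eq N hN _ hperH, inner_shift_eq N hN ψ hper]
    rw [Finset.sum_congr rfl key]
  rw [heq]
  exact horth l hl


end WP
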